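/- For every k ≥ 2 and i ∈ {0,...,m}, the Vietoris-Rips complex of (S,h*) at scale k + i/N equals the Vietoris-Rips complex of (S,h) at scale k restricted as follows: a nonempty subset σ ⊆ S lies in V_{k+i/N}(S,h*) if and only if for all distinct x,y ∈ σ, either h(x,y) ≤ k-1, or (h(x,y) = k and max(D(x),D(y)) ≤ i). -/
import Mathlib


/-- The Vietoris-Rips complex of the points of `T` with distance `d` at scale `r`:
nonempty finite subsets of `T` whose points are pairwise at distance `≤ r`. -/
def VR {S : Type*} [DecidableEq S] (d : S → S → ℝ) (T : Set S) (r : ℝ) :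
    Set (Finset S) :=
  {σ | σ.Nonempty ∧ ↑σ ⊆ T ∧ ∀ x ∈ σ, ∀ y ∈ σ, d x y ≤ r}

/-- For `k ≥ 2` and `i ≤ m`: `σ ∈ V_{k+i/N}(S, h*)` iff `σ` is nonempty and
for all distinct `x, y ∈ σ`, either `h(x,y) ≤ k-1`, or `h(x,y) = k` and
`max(D x, D y) ≤ i`. -/
theorem VR_hstar_mem_iff
{S : Type*} [Fintype S] [DecidableEq S]
    (m N : ℕ) (hNpow : ∃ k, N = 10 ^ k) (hmN : m < N)
    (hNmin : ∀ k, m < 10 ^ k → N ≤ 10 ^ k)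
    (Sf : ℕ → Set S) (hmono : Monotone Sf) (htop : Sf m = Set.univ)
    (h : S → S → ℕ) (hsymm : ∀ x y, h x y = h y x)
    (hzero : ∀ x y, h x y = 0 ↔ x = y)
    (D : S → ℕ) (hD : ∀ x i, x ∈ Sf i ↔ D x ≤ i)
    (hstar : S → S → ℝ)
    (hstarDef : ∀ x y, x ≠ y →
      hstar x y = (h x y : ℝ) + (max (D x) (D y) : ℝ) / (N : ℝ))
    (hstarDiag : ∀ x, hstar x x = 0) :
    ∀ k : ℕ, 2 ≤ k → ∀ i, i ≤ m → ∀ σ : Finset S,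
      (σ ∈ VR hstar Set.univ ((k : ℝ) + (i : ℝ) / (N : ℝ)) ↔
        σ.Nonempty ∧ ∀ x ∈ σ, ∀ y ∈ σ, x ≠ y →
          (h x y ≤ k - 1 ∨ (h x y = k ∧ max (D x) (D y) ≤ i))) := by
  intro k hk i hi σ
  have hN0 : (0:ℝ) < N := by
    have : 0 < N := lt_of_le_of_lt (Nat.zero_le m) hmN
    exact_mod_cast this
  have hDm : ∀ x : S, D x ≤ m := by
    intro x
    exact (hD x m).mp (htop ▸ Set.mem_univ x)
  constructor
  · rintro ⟨hne, -, hpair⟩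
    refine ⟨hne, ?_⟩
    intro x hx y hy hxy
    have hle := hpair x hx y hy
    rw [hstarDef x y hxy] at hle
    rw [← Nat.cast_max] at hle
    set M := max (D x) (D y) with hM
    have hMm : M ≤ m := max_le (hDm x) (hDm y)
    have hMN : (M:ℝ) < N := by exact_mod_cast lt_of_le_of_lt hMm hmN
    have hiN : (i:ℝ) < N := by exact_mod_cast lt_of_le_of_lt hi hmN
    have hhk : h x y ≤ k := by
      have : (h x y : ℝ) < k + 1 := by
        have h2 : (0:ℝ) ≤ (M:ℝ)/N := div_nonneg (by positivity) hN0.le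
        have h3 : (i:ℝ)/N < 1 := (div_lt_one hN0).mpr hiN
        linarith
      exact_mod_cast Nat.lt_succ_iff.mp (by exact_mod_cast this)
    rcases lt_or_eq_of_le hhk with hlt | heq
    · left; omega
    · right
      refine ⟨heq, ?_⟩
      have hk' : (h x y : ℝ) = k := by exact_mod_cast heq
      have hdiv : (M:ℝ)/N ≤ (i:ℝ)/N := by linarith
      have : (M:ℝ) ≤ i := by
        have := (div_le_div_iff_of_pos_right hN0).mp hdiv
        linarith
      exact_mod_cast this
  · rintro ⟨hne, hpair⟩
    refine ⟨hne, by simp, ?_⟩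
    intro x hx y hy
    by_cases hxy : x = y
    · subst hxy
      rw [hstarDiag]
      positivity
    · rw [hstarDef x y hxy, ← Nat.cast_max]
      set M := max (D x) (D y) with hM
      have hMm : M ≤ m := max_le (hDm x) (hDm y)
      have hMN : (M:ℝ) < N := by exact_mod_cast lt_of_le_of_lt hMm hmN
      have h0i : (0:ℝ) ≤ (i:ℝ)/N := div_nonneg (by positivity) hN0.le
      rcases hpair x hx y hy hxy with hle | ⟨heq, hMi⟩
      · have : (h x y : ℝ) ≤ (k:ℝ) - 1 := by
          have : (h x y : ℝ) ≤ ((k-1 : ℕ) : ℝ) := by exact_mod_cast hle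
          rw [Nat.cast_sub (by omega)] at this
          simpa using this
        have hMN1 : (M:ℝ)/N < 1 := (div_lt_one hN0).mpr hMN
        linarith
      · have h1 : (h x y : ℝ) = k := by exact_mod_cast heq
        have h2 : (M:ℝ)/N ≤ (i:ℝ)/N :=
          div_le_div_of_nonneg_right (c := (N:ℝ)) (by exact_mod_cast hMi) hN0.le
        linarith
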